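/- Fix an even integer d ≥ 2 and set a_1(n) = 4n^d − 2n^{d/2}, a_2(n) = 4n^d − 1, a_3(n) = 4n^d + 2n^{d/2}, a_4(n) = 4n^d + 4n^{d/2} − 1. For n ≥ 1 and an integer μ with 1 ≤ μ ≤ 2n^{d/2}, let f(μ) = (μ + 1)·a_1(n) + (2n^{d/2} − μ)·a_2(n). Then: (i) f(μ) = (μ − 1)·a_3(n) + (2n^{d/2} − μ)·a_4(n); and (ii) every (z_1, z_2, z_3, z_4) ∈ ℕ^4 with z_1·a_1(n) + z_2·a_2(n) + z_3·a_3(n) + z_4·a_4(n) = f(μ) satisfies either z_1 = z_2 = 0 or z_3 = z_4 = 0. -/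

import Mathlib

/-- The Bresinsky-type generators
`a₁(n) = 4n^d − 2n^{d/2}`, `a₂(n) = 4n^d − 1`,
`a₃(n) = 4n^d + 2n^{d/2}`, `a₄(n) = 4n^d + 4n^{d/2} − 1`. -/
def aa (d n : ℕ) : Fin 4 → ℕ :=
  ![4 * n ^ d - 2 * n ^ (d / 2), 4 * n ^ d - 1,
    4 * n ^ d + 2 * n ^ (d / 2), 4 * n ^ d + 4 * n ^ (d / 2) - 1]

lemma key (M μ x1 x2 x3 x4 : ℤ) (hM : 1 ≤ M)
    (hμ1 : 1 ≤ μ) (hμ2 : μ ≤ 2*M)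
    (h1 : 0 ≤ x1) (h2 : 0 ≤ x2) (h3 : 0 ≤ x3) (h4 : 0 ≤ x4)
    (hE : x1*(4*M^2-2*M) + x2*(4*M^2-1) + x3*(4*M^2+2*M) + x4*(4*M^2+4*M-1)
        = (μ+1)*(4*M^2-2*M) + (2*M-μ)*(4*M^2-1))
    (hA : 1 ≤ x1 + x2) (hB : 1 ≤ x3 + x4) : False := by
  rcases eq_or_lt_of_le hM with hM1 | hM2
  · -- M = 1
    have : (1:ℤ) = M := hM1
    subst this
    norm_num at hE
    omega
  · have hM2' : 2 ≤ M := hM2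
    -- size bound
    have hZ : x1 + x2 + x3 + x4 ≤ 2*M + 1 := by
      by_contra hcon
      push_neg at hcon
      have hcon' : 2*M + 2 ≤ x1 + x2 + x3 + x4 := by omega
      nlinarith [mul_nonneg h2 (by nlinarith : (0:ℤ) ≤ 2*M - 1),
        mul_nonneg h3 (by nlinarith : (0:ℤ) ≤ 4*M),
        mul_nonneg h4 (by nlinarith : (0:ℤ) ≤ 6*M - 1),
        mul_le_mul_of_nonneg_right hcon' (by nlinarith : (0:ℤ) ≤ 4*M^2 - 2*M)]
    -- divisibility
    have hdvd : (2*M - 1) ∣ 2*(x3 + x4) :=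
      ⟨(4*M^2+4*M-μ) - x1*(2*M) - x2*(2*M+1) - x3*(2*M+2) - x4*(2*M+3), by
        linear_combination hE⟩
    obtain ⟨k, hk⟩ := hdvd
    have hkeven : Even k := by
      rcases Int.even_mul.mp (⟨x3 + x4, by linarith⟩ : Even ((2*M-1)*k)) with h | h
      · exfalso; rcases h with ⟨t, ht⟩; omega
      · exact h
    obtain ⟨j, hj⟩ := hkeven
    have hT : x3 + x4 = (2*M - 1) * j :=
      mul_left_cancel₀ (by norm_num : (2:ℤ) ≠ 0)
        (show 2*(x3 + x4) = 2*((2*M - 1)*j) by linear_combination hk + (2*M - 1) * hj)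
    have hj1 : 1 ≤ j := by nlinarith
    have hj2 : j ≤ 1 := by nlinarith
    have hT' : x3 + x4 = 2*M - 1 := by rw [hT]; nlinarith
    -- final reduction
    have h0 : (2*M - 1) * (x1*(2*M) + x2*(2*M+1) + x4 - (2*M - μ)) = 0 := by
      linear_combination hE - (4*M^2 + 2*M) * hT'
    have h0' : x1*(2*M) + x2*(2*M+1) + x4 - (2*M - μ) = 0 := by
      rcases mul_eq_zero.mp h0 with h | h
      · exfalso; omega
      · exact h
    nlinarith [mul_le_mul_of_nonneg_right hA (by linarith : (0:ℤ) ≤ 2*M),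
      mul_nonneg h2 (by linarith : (0:ℤ) ≤ 1)]
theorem stmt17 (d : ℕ) (hd : Even d) (hd2 : 2 ≤ d) (n : ℕ) (hn : 1 ≤ n)
    (μ : ℕ) (hμ1 : 1 ≤ μ) (hμ2 : μ ≤ 2 * n ^ (d / 2)) :
    ((μ + 1) * aa d n 0 + (2 * n ^ (d / 2) - μ) * aa d n 1
        = (μ - 1) * aa d n 2 + (2 * n ^ (d / 2) - μ) * aa d n 3) ∧
      ∀ z : Fin 4 → ℕ,
        (∑ i, z i * aa d n i)
            = (μ + 1) * aa d n 0 + (2 * n ^ (d / 2) - μ) * aa d n 1 →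
          (z 0 = 0 ∧ z 1 = 0) ∨ (z 2 = 0 ∧ z 3 = 0) := by
  set M := n ^ (d / 2) with hMdef
  have hM1 : 1 ≤ M := Nat.one_le_pow _ _ hn
  have hpow : n ^ d = M ^ 2 := by
    rw [hMdef, ← pow_mul, Nat.div_mul_cancel hd.two_dvd]
  have ha0 : aa d n 0 = 4 * M ^ 2 - 2 * M := by simp [aa, hpow, ← hMdef]
  have ha1 : aa d n 1 = 4 * M ^ 2 - 1 := by simp [aa, hpow]
  have ha2 : aa d n 2 = 4 * M ^ 2 + 2 * M := by simp [aa, hpow, ← hMdef]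
  have ha3 : aa d n 3 = 4 * M ^ 2 + 4 * M - 1 := by simp [aa, hpow, ← hMdef]
  have hle1 : 2 * M ≤ 4 * M ^ 2 := by nlinarith
  have hle2 : 1 ≤ 4 * M ^ 2 := by nlinarith
  have hle3 : 1 ≤ 4 * M ^ 2 + 4 * M := by nlinarith
  constructor
  · rw [ha0, ha1, ha2, ha3]
    zify [hle1, hle2, hle3, hμ1, hμ2]
    ring
  · intro z hz
    rw [Fin.sum_univ_four, ha0, ha1, ha2, ha3] at hz
    by_contra hcon
    push_neg at hcon
    obtain ⟨hc1, hc2⟩ := hcon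
    have hA : 1 ≤ z 0 + z 1 := by
      by_cases h0 : z 0 = 0
      · have := hc1 h0; omega
      · omega
    have hB : 1 ≤ z 2 + z 3 := by
      by_cases h0 : z 2 = 0
      · have := hc2 h0; omega
      · omega
    refine key (M : ℤ) (μ : ℤ) (z 0) (z 1) (z 2) (z 3) ?_ ?_ ?_ ?_ ?_ ?_ ?_ ?_ ?_ ?_
    · exact_mod_cast hM1
    · exact_mod_cast hμ1
    · exact_mod_cast hμ2
    · positivity
    · positivity
    · positivity
    · positivity
    · zify [hle1, hle2, hle3, hμ2] at hz
      linear_combination hz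
    · exact_mod_cast hA
    · exact_mod_cast hB
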